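/- An integer b divides all of the binomial coefficients C(n, k+1), C(n, k+2), ..., C(n, k+i) if and only if b divides all of the binomial coefficients C(n, k+1), C(n+1, k+2), ..., C(n+i-1, k+i). -/

import Mathlib

lemma vand_int (m n r : ℕ) :
    ((m + n).choose r : ℤ) =
      ∑ ij ∈ Finset.HasAntidiagonal.antidiagonal r, (m.choose ij.1 : ℤ) * (n.choose ij.2 : ℤ) := by
  rw [Nat.add_choose_eq]; push_cast; ring_nf

theorem stmt_1 (n k i : ℕ) (b : ℤ) :
    (∀ j ∈ Finset.Icc 1 i, b ∣ (n.choose (k + j) : ℤ)) ↔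
      (∀ j ∈ Finset.Icc 1 i, b ∣ ((n + j - 1).choose (k + j) : ℤ)) := by
  have key : ∀ j, 1 ≤ j → ((n + j - 1).choose (k + j) : ℤ) =
      ∑ ij ∈ Finset.HasAntidiagonal.antidiagonal (k + j), ((j-1).choose ij.1 : ℤ) * (n.choose ij.2 : ℤ) := by
    intro j hj
    have : n + j - 1 = (j - 1) + n := by omega
    rw [this, vand_int]
  constructor
  · intro h j hj
    simp only [Finset.mem_Icc] at hj
    rw [key j hj.1]
    apply Finset.dvd_sum
    rintro ⟨a, c⟩ hac
    simp only [Finset.HasAntidiagonal.mem_antidiagonal] at hac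
    by_cases ha : a ≤ j - 1
    · have hc : c = k + (j - a) := by omega
      have := h (j - a) (Finset.mem_Icc.mpr ⟨by omega, by omega⟩)
      rw [hc]
      exact Dvd.dvd.mul_left this _
    · have : (j-1).choose a = 0 := Nat.choose_eq_zero_of_lt (by omega)
      simp [this]
  · intro h
    have main : ∀ j, 1 ≤ j → j ≤ i → b ∣ (n.choose (k + j) : ℤ) := by
      intro j
      induction j using Nat.strong_induction_on with
      | _ j ih =>
        intro hj1 hji
        have hk := key j hj1
        have hmem : ((0 : ℕ), k + j) ∈ Finset.HasAntidiagonal.antidiagonal (k + j) := by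
          simp [Finset.mem_antidiagonal]
        rw [Finset.sum_eq_add_sum_sdiff_singleton_of_mem hmem] at hk
        have hterm : (((j-1).choose 0 : ℕ) : ℤ) * (n.choose (k + j) : ℤ)
            = (n.choose (k + j) : ℤ) := by simp
        have heq : (n.choose (k + j) : ℤ) = ((n + j - 1).choose (k + j) : ℤ) -
            ∑ ij ∈ Finset.HasAntidiagonal.antidiagonal (k + j) \ {((0 : ℕ), k + j)},
              ((j-1).choose ij.1 : ℤ) * (n.choose ij.2 : ℤ) := by
          rw [hk, hterm]; ring
        rw [heq]
        apply dvd_sub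
        · exact h j (Finset.mem_Icc.mpr ⟨hj1, hji⟩)
        · apply Finset.dvd_sum
          rintro ⟨a, c⟩ hac
          simp only [Finset.mem_sdiff, Finset.HasAntidiagonal.mem_antidiagonal, Finset.mem_singleton,
            Prod.mk.injEq] at hac
          have ha1 : 1 ≤ a := by omega
          by_cases ha : a ≤ j - 1
          · have hc : c = k + (j - a) := by omega
            have := ih (j - a) (by omega) (by omega) (by omega)
            rw [hc]
            exact Dvd.dvd.mul_left this _
          · have : (j-1).choose a = 0 := Nat.choose_eq_zero_of_lt (by omega)
            simp [this]
    intro j hj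
    simp only [Finset.mem_Icc] at hj
    exact main j hj.1 hj.2
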